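/- Let n and k be natural numbers with base-5 expansions n = n_0 + n_1·5 + n_2·5² + ⋯ and k = k_0 + k_1·5 + k_2·5² + ⋯ where 0 ≤ n_i, k_i < 5. Then 5 divides the fibonomial coefficient C(n,k)_F if and only if 5 divides the product C(n_0,k_0)_F · C(n_1,k_1)_F · C(n_2,k_2)_F ⋯ (where all but finitely many factors equal 1, and C(a,b)_F = 0 when b > a). -/

import Mathlib

/-- The fibotorial `n!_F = F_n · F_{n-1} ⋯ F_1`, with `0!_F = 1`. -/
def fibotorial (n : ℕ) : ℕ := ∏ i ∈ Finset.range n, Nat.fib (i + 1)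

/-- The fibonomial coefficient `C(n,k)_F = n!_F / (k!_F · (n-k)!_F)` for `k ≤ n`,
and `0` otherwise. -/
def fibnomial (n k : ℕ) : ℕ :=
  if k ≤ n then fibotorial n / (fibotorial k * fibotorial (n - k)) else 0

lemma cassini (j : ℕ) :
    (Nat.fib (j+1) : ℤ)^2 - Nat.fib (j+1) * Nat.fib j - (Nat.fib j : ℤ)^2 = (-1)^j := by
  induction j with
  | zero => simp
  | succ j ih =>
    have h := Nat.fib_add_two (n := j)
    push_cast [h]
    push_cast at ih
    linear_combination -ih

lemma fib_five_mul (j : ℕ) :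
    (Nat.fib (5*j+5) : ℤ) =
      Nat.fib (j+1) * (25 * (Nat.fib (j+1) : ℤ)^4 - 25 * (-1)^j * (Nat.fib (j+1):ℤ)^2 + 5) := by
  have h21 := Nat.fib_two_mul_add_one j
  have h22 := Nat.fib_add j (j+1)
  have h23 := Nat.fib_two_mul_add_one (j+1)
  have h44 := Nat.fib_add (2*j+1) (2*j+2)
  have h45 := Nat.fib_two_mul_add_one (2*j+2)
  have h55 := Nat.fib_add (4*j+4) j
  have hF2 := Nat.fib_add_two (n := j)
  rw [show j + (j+1) + 1 = 2*j+2 by ring] at h22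
  rw [show 2*(j+1)+1 = 2*j+3 by ring] at h23
  rw [show 2*j+1 + (2*j+2) + 1 = 4*j+4 by ring, show 2*j+1+1 = 2*j+2 by ring] at h44
  rw [show 2*(2*j+2)+1 = 4*j+5 by ring, show 2*j+2+1 = 2*j+3 by ring] at h45
  rw [show 4*j+4 + j + 1 = 5*j+5 by ring, show 4*j+4+1 = 4*j+5 by ring] at h55
  have hc := cassini j
  have hs : ((-1:ℤ)^j)^2 = 1 := by
    rcases Nat.even_or_odd j with he | ho
    · rw [he.neg_one_pow]; norm_num
    · rw [ho.neg_one_pow]; norm_num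
  rw [h55, h44, h45, h21, h22, h23, hF2]
  push_cast
  set a := (Nat.fib j : ℤ)
  set b := (Nat.fib (j+1) : ℤ)
  linear_combination (5*b*((b^2 - b*a - a^2) + (-1)^j) - 25*b^3) * hc + 5*b*hs

lemma five_dvd_fib_iff (m : ℕ) : 5 ∣ Nat.fib m ↔ 5 ∣ m := by
  constructor
  · intro h
    have hg := Nat.fib_gcd 5 m
    have h5 : Nat.gcd 5 (Nat.fib m) = 5 := Nat.gcd_eq_left h
    rw [show Nat.fib 5 = 5 from rfl, h5] at hg
    have hd : Nat.gcd 5 m ∣ 5 := Nat.gcd_dvd_left 5 m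
    have hle : Nat.gcd 5 m ≤ 5 := Nat.le_of_dvd (by norm_num) hd
    have hgd := Nat.gcd_dvd_right 5 m
    interval_cases h : Nat.gcd 5 m <;> simp_all <;> exact absurd hd (by decide)
  · intro h
    have := Nat.fib_dvd 5 m h
    simpa [show Nat.fib 5 = 5 from rfl] using this

lemma fib_five_mul_structure (m : ℕ) (hm : 1 ≤ m) :
    ∃ t : ℕ, Nat.fib (5 * m) = Nat.fib m * (5 * t) ∧ t % 5 = 1 := by
  obtain ⟨j, rfl⟩ : ∃ j, m = j + 1 := ⟨m - 1, by omega⟩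
  have h := fib_five_mul j
  set b : ℤ := (Nat.fib (j+1) : ℤ) with hb
  have hbpos : 1 ≤ b := by
    have h0 : 0 < Nat.fib (j+1) := Nat.fib_pos.mpr (Nat.succ_pos j)
    rw [hb]; exact_mod_cast h0
  set u : ℤ := 5*b^4 - 5*(-1)^j*b^2 + 1 with hu
  have hs : (-1:ℤ)^j = 1 ∨ (-1:ℤ)^j = -1 := by
    rcases Nat.even_or_odd j with he | ho
    · left; exact he.neg_one_pow
    · right; exact ho.neg_one_pow
  have hb2 : b^2 ≤ b^4 := by nlinarith [sq_nonneg b, sq_nonneg (b^2 - 1), sq_nonneg (b-1)]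
  have hu1 : 1 ≤ u := by rcases hs with h1 | h1 <;> rw [hu, h1] <;> nlinarith
  have hu5 : u % 5 = 1 := by
    have hrep : u = 5*(b^4 - (-1)^j * b^2) + 1 := by ring
    omega
  refine ⟨u.toNat, ?_, ?_⟩
  · have htc : (u.toNat : ℤ) = u := Int.toNat_of_nonneg (by omega)
    have : (Nat.fib (5 * (j+1)) : ℤ) = ((Nat.fib (j+1) * (5 * u.toNat) : ℕ) : ℤ) := by
      push_cast [htc]
      rw [show 5 * (j+1) = 5*j+5 by ring, h]
      ring
    exact_mod_cast this
  · have htc : (u.toNat : ℤ) = u := Int.toNat_of_nonneg (by omega)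
    have : ((u.toNat % 5 : ℕ) : ℤ) = 1 := by
      push_cast [htc]
      omega
    exact_mod_cast this

lemma fib_factorization_five (m : ℕ) :
    (Nat.fib m).factorization 5 = m.factorization 5 := by
  induction m using Nat.strong_induction_on with
  | _ m ih =>
    rcases Nat.eq_zero_or_pos m with rfl | hm
    · simp
    by_cases h5 : 5 ∣ m
    · obtain ⟨m', rfl⟩ := h5
      have hm' : 1 ≤ m' := by omega
      obtain ⟨t, ht, ht5⟩ := fib_five_mul_structure m' hm'
      have hfibne : Nat.fib m' ≠ 0 := (Nat.fib_pos.mpr hm').ne'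
      have htne : t ≠ 0 := by omega
      have ht5' : ¬ (5 ∣ t) := by omega
      have hihm : m' < 5 * m' := by omega
      rw [ht, Nat.factorization_mul hfibne (by positivity),
        Nat.factorization_mul (by norm_num : (5:ℕ) ≠ 0) htne,
        Nat.factorization_mul (by norm_num : (5:ℕ) ≠ 0) (by omega : m' ≠ 0)]
      simp only [Finsupp.add_apply]
      rw [ih m' hihm, Nat.factorization_eq_zero_of_not_dvd ht5']
      omega
    · rw [Nat.factorization_eq_zero_of_not_dvd h5,
        Nat.factorization_eq_zero_of_not_dvd (fun h => h5 ((five_dvd_fib_iff m).mp h))]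

lemma fibotorial_pos (n : ℕ) : 0 < fibotorial n := by
  apply Finset.prod_pos
  intro i _
  exact Nat.fib_pos.mpr (Nat.succ_pos i)

lemma fibotorial_succ (n : ℕ) : fibotorial (n+1) = fibotorial n * Nat.fib (n+1) :=
  Finset.prod_range_succ _ n

lemma fibotorial_mul_dvd : ∀ n k : ℕ, k ≤ n → fibotorial k * fibotorial (n - k) ∣ fibotorial n := by
  intro n
  induction n with
  | zero => intro k hk; interval_cases k; simp [fibotorial]
  | succ n ih =>
    intro k hk
    rcases Nat.eq_zero_or_pos k with rfl | hk1
    · simpa [fibotorial] using dvd_refl (fibotorial (n+1))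
    rcases eq_or_lt_of_le hk with rfl | hklt
    · simp [fibotorial]
    have hkn : k ≤ n := by omega
    have hfib : Nat.fib (n+1) = Nat.fib k * Nat.fib (n - k) + Nat.fib (k+1) * Nat.fib (n-k+1) := by
      have := Nat.fib_add k (n - k)
      rwa [show k + (n - k) + 1 = n + 1 by omega] at this
    rw [fibotorial_succ, hfib, Nat.mul_add]
    apply dvd_add
    · -- divisor ∣ fibotorial n * (fib k * fib (n-k))
      have ih1 := ih (k-1) (by omega)
      have hD : fibotorial k * fibotorial (n + 1 - k)
          = Nat.fib k * (fibotorial (k-1) * fibotorial (n - (k-1))) := by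
        rw [show k = (k-1)+1 by omega, fibotorial_succ (k-1)]
        rw [show (k-1)+1 = k by omega, show n + 1 - k = n - (k-1) by omega]
        ring
      rw [hD]
      calc Nat.fib k * (fibotorial (k-1) * fibotorial (n - (k-1)))
          ∣ Nat.fib k * fibotorial n := mul_dvd_mul_left _ ih1
        _ ∣ fibotorial n * (Nat.fib k * Nat.fib (n - k)) := ⟨Nat.fib (n-k), by ring⟩
    · have ih2 := ih k hkn
      have hD : fibotorial k * fibotorial (n + 1 - k)
          = Nat.fib (n-k+1) * (fibotorial k * fibotorial (n - k)) := by
        rw [show n + 1 - k = (n-k)+1 by omega, fibotorial_succ (n-k)]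
        ring
      rw [hD]
      calc Nat.fib (n-k+1) * (fibotorial k * fibotorial (n - k))
          ∣ Nat.fib (n-k+1) * fibotorial n := mul_dvd_mul_left _ ih2
        _ ∣ fibotorial n * (Nat.fib (k+1) * Nat.fib (n-k+1)) := ⟨Nat.fib (k+1), by ring⟩

lemma fibotorial_factorization (n : ℕ) :
    (fibotorial n).factorization 5 = (Nat.factorial n).factorization 5 := by
  rw [fibotorial, ← Finset.prod_range_add_one_eq_factorial n]
  rw [Nat.factorization_prod (fun i _ => (Nat.fib_pos.mpr (Nat.succ_pos i)).ne'),
    Nat.factorization_prod (fun i _ => (Nat.succ_pos i).ne')]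
  simp only [Finset.sum_apply']
  exact Finset.sum_congr rfl fun i _ => fib_factorization_five (i+1)

lemma fibnomial_dvd_iff (n k : ℕ) : 5 ∣ fibnomial n k ↔ 5 ∣ n.choose k := by
  by_cases h : k ≤ n
  · have hd := fibotorial_mul_dvd n k h
    have hd' := Nat.factorial_mul_factorial_dvd_factorial h
    have hDpos : 0 < fibotorial k * fibotorial (n - k) :=
      Nat.mul_pos (fibotorial_pos k) (fibotorial_pos (n-k))
    have hfibnom : fibnomial n k = fibotorial n / (fibotorial k * fibotorial (n-k)) := by
      simp [fibnomial, h]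
    have hfibne : fibnomial n k ≠ 0 := by
      rw [hfibnom]
      exact (Nat.div_pos (Nat.le_of_dvd (fibotorial_pos n) hd) hDpos).ne'
    have hchoosene : n.choose k ≠ 0 := (Nat.choose_pos h).ne'
    have hfact : (fibnomial n k).factorization 5 = (n.choose k).factorization 5 := by
      rw [hfibnom, Nat.factorization_div hd,
        Nat.choose_eq_factorial_div_factorial h, Nat.factorization_div hd']
      simp only [Finsupp.tsub_apply]
      rw [fibotorial_factorization,
        Nat.factorization_mul (fibotorial_pos k).ne' (fibotorial_pos (n-k)).ne',
        Nat.factorization_mul (Nat.factorial_pos k).ne' (Nat.factorial_pos (n-k)).ne']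
      simp only [Finsupp.add_apply]
      rw [fibotorial_factorization, fibotorial_factorization]
    have hp : Nat.Prime 5 := by norm_num
    rw [hp.dvd_iff_one_le_factorization hfibne, hp.dvd_iff_one_le_factorization hchoosene, hfact]
  · simp [fibnomial, h, Nat.choose_eq_zero_of_lt (by omega : n < k)]

/-- Lucas-type divisibility criterion mod 5 for fibonomial coefficients: with base-5
digits `n_i = n / 5^i % 5` and `k_i = k / 5^i % 5`, we have `5 ∣ C(n,k)_F` iff `5`
divides the product of the digitwise fibonomial coefficients.  Any `N` with
`n, k < 5^N` covers all nonzero digits (all further factors are `C(0,0)_F = 1`). -/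
theorem five_dvd_fibnomial_iff_digits (n k N : ℕ) (hn : n < 5 ^ N) (hk : k < 5 ^ N) :
    5 ∣ fibnomial n k ↔
      5 ∣ ∏ i ∈ Finset.range N, fibnomial (n / 5 ^ i % 5) (k / 5 ^ i % 5) := by
  haveI : Fact (Nat.Prime 5) := ⟨by norm_num⟩
  have hp : Prime (5 : ℕ) := (by norm_num : Nat.Prime 5).prime
  have hlucas := Choose.choose_modEq_prod_range_choose_nat (p := 5) hn hk
  calc 5 ∣ fibnomial n k
      ↔ 5 ∣ n.choose k := fibnomial_dvd_iff n k
    _ ↔ 5 ∣ ∏ i ∈ Finset.range N, Nat.choose (n / 5 ^ i % 5) (k / 5 ^ i % 5) := by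
        rw [← Nat.modEq_zero_iff_dvd, ← Nat.modEq_zero_iff_dvd]
        exact ⟨hlucas.symm.trans, hlucas.trans⟩
    _ ↔ ∃ i ∈ Finset.range N, 5 ∣ Nat.choose (n / 5 ^ i % 5) (k / 5 ^ i % 5) :=
        hp.dvd_finset_prod_iff _
    _ ↔ ∃ i ∈ Finset.range N, 5 ∣ fibnomial (n / 5 ^ i % 5) (k / 5 ^ i % 5) := by
        refine exists_congr fun i => and_congr_right fun _ => ?_
        rw [fibnomial_dvd_iff]
    _ ↔ 5 ∣ ∏ i ∈ Finset.range N, fibnomial (n / 5 ^ i % 5) (k / 5 ^ i % 5) :=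
        (hp.dvd_finset_prod_iff _).symm
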